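/- For every even L ≥ 2, the Q2R model satisfies 4 ≤ |P₁| and |P₁| < |P₂|, where P₁ is the set of fixed points of F and P₂ is the set of configurations of minimal period 2 under F. (In particular (𝟙,𝟙), (−𝟙,−𝟙) and the two chessboard configurations are fixed points.) -/

import Mathlib

/-- A site of the `L × L` toroidal lattice. -/
abbrev Site (L : ℕ) := ZMod L × ZMod L

/-- The set `Ω` of states: functions on the lattice with values in `{-1, 1}`. -/
def Omega (L : ℕ) := {x : Site L → ℤ // ∀ k, x k = 1 ∨ x k = -1}

namespace Q2R

variable {L : ℕ}

/-- The sum of the four von Neumann neighbors of site `k`. -/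
def nbhdSum (x : Site L → ℤ) (k : Site L) : ℤ :=
  x (k + (1, 0)) + x (k - (1, 0)) + x (k + (0, 1)) + x (k - (0, 1))

/-- The map `φ : Ω → Ω`, detecting null neighborhoods. -/
def phi (x : Omega L) : Omega L :=
  ⟨fun k => if nbhdSum x.1 k = 0 then -1 else 1, fun k => by
    by_cases h : nbhdSum x.1 k = 0 <;> simp [h]⟩

/-- Hadamard (pointwise) product `x ⊙ y`. -/
def had (x y : Omega L) : Omega L :=
  ⟨fun k => x.1 k * y.1 k, fun k => by
    rcases x.2 k with h | h <;> rcases y.2 k with h' | h' <;> simp [h, h']⟩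

/-- The constant state `𝟙`. -/
def one : Omega L := ⟨fun _ => 1, fun _ => Or.inl rfl⟩

/-- Negation: `-x = (-𝟙) ⊙ x`. -/
def neg (x : Omega L) : Omega L := had ⟨fun _ => -1, fun _ => Or.inr rfl⟩ x

/-- The Q2R map `F(x, y) = (y ⊙ φ(x), x)`. -/
def F : Omega L × Omega L → Omega L × Omega L := fun p => (had p.2 (phi p.1), p.1)

/-- The configuration `p` has minimal period `T ≥ 1` under `F`. -/
def IsMinPeriod (p : Omega L × Omega L) (T : ℕ) : Prop :=
  F^[T] p = p ∧ ∀ t, 0 < t → t < T → F^[t] p ≠ p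

/-- The orbit of a configuration under `F`. -/
def orbit (p : Omega L × Omega L) : Set (Omega L × Omega L) :=
  {q | ∃ t : ℕ, F^[t] p = q}

end Q2R

namespace Q2R

variable {L : ℕ}

lemma omega_ne_zero (x : Omega L) (k : Site L) : x.1 k ≠ 0 := by
  rcases x.2 k with h | h <;> simp [h]

lemma had_one (x : Omega L) : had x one = x := by
  apply Subtype.ext; funext k; simp [had, one]

lemma had_eq_self (x u : Omega L) : had x u = x ↔ u = one := by
  constructor
  · intro h
    apply Subtype.ext; funext k
    have h' := congrFun (congrArg Subtype.val h) k
    have hx := omega_ne_zero x k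
    show u.1 k = 1
    have : x.1 k * u.1 k = x.1 k * 1 := by simpa [had] using h'
    exact mul_left_cancel₀ hx this
  · rintro rfl; exact had_one x

lemma phi_eq_one_iff (x : Omega L) : phi x = one ↔ ∀ k, nbhdSum x.1 k ≠ 0 := by
  constructor
  · intro h k hk
    have := congrFun (congrArg Subtype.val h) k
    simp [phi, one, hk] at this
  · intro h
    apply Subtype.ext; funext k
    simp [phi, one, h k]

lemma neg_val (x : Omega L) (k : Site L) : (neg x).1 k = -(x.1 k) := by
  simp [neg, had]

lemma phi_neg (x : Omega L) : phi (neg x) = phi x := by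
  apply Subtype.ext; funext k
  have : nbhdSum (neg x).1 k = -(nbhdSum x.1 k) := by
    simp [nbhdSum, neg_val]; ring
  simp [phi, this]

lemma neg_ne (x : Omega L) : neg x ≠ x := by
  intro h
  have := congrFun (congrArg Subtype.val h) (0, 0)
  rw [neg_val] at this
  rcases x.2 (0, 0) with h' | h' <;> rw [h'] at this <;> norm_num at this

lemma fixed_iff (p : Omega L × Omega L) : F p = p ↔ p.2 = p.1 ∧ phi p.1 = one := by
  constructor
  · intro h
    have h1 : had p.2 (phi p.1) = p.1 := congrArg Prod.fst h
    have h2 : p.1 = p.2 := congrArg Prod.snd h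
    refine ⟨h2.symm, ?_⟩
    rw [h2] at h1 ⊢
    exact (had_eq_self _ _).1 h1
  · rintro ⟨h2, h1⟩
    have hF : F p = (had p.2 (phi p.1), p.1) := rfl
    rw [hF, h1, had_one]
    exact Prod.ext h2 h2.symm

lemma per2_iff (p : Omega L × Omega L) :
    F^[2] p = p ↔ phi p.1 = one ∧ phi p.2 = one := by
  have hF2 : F^[2] p = (had p.1 (phi (had p.2 (phi p.1))), had p.2 (phi p.1)) := rfl
  rw [hF2]
  constructor
  · intro h
    have h2 : had p.2 (phi p.1) = p.2 := congrArg Prod.snd h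
    have hp1 : phi p.1 = one := (had_eq_self _ _).1 h2
    have h1 : had p.1 (phi (had p.2 (phi p.1))) = p.1 := congrArg Prod.fst h
    rw [h2] at h1
    exact ⟨hp1, (had_eq_self _ _).1 h1⟩
  · rintro ⟨h1, h2⟩
    rw [h1, had_one, h2, had_one]

lemma min2_iff (p : Omega L × Omega L) :
    IsMinPeriod p 2 ↔ phi p.1 = one ∧ phi p.2 = one ∧ p.1 ≠ p.2 := by
  constructor
  · rintro ⟨h2, hmin⟩
    obtain ⟨ha, hb⟩ := (per2_iff p).1 h2
    refine ⟨ha, hb, ?_⟩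
    intro he
    apply hmin 1 one_pos one_lt_two
    show F p = p
    rw [fixed_iff]
    exact ⟨he.symm, ha⟩
  · rintro ⟨ha, hb, hne⟩
    refine ⟨(per2_iff p).2 ⟨ha, hb⟩, ?_⟩
    intro t ht ht2
    interval_cases t
    intro h
    exact hne ((fixed_iff p).1 h).1.symm

/-- The chessboard state, for `2 ∣ L`. -/
def chess (L : ℕ) (h2 : (2 : ℕ) ∣ L) : Omega L :=
  ⟨fun k => if ZMod.castHom h2 (ZMod 2) (k.1 + k.2) = 0 then 1 else -1, fun k => by
    by_cases h : ZMod.castHom h2 (ZMod 2) (k.1 + k.2) = 0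
    · exact Or.inl (if_pos h)
    · exact Or.inr (if_neg h)⟩

lemma chess_val (h2 : (2 : ℕ) ∣ L) (k : Site L) :
    (chess L h2).1 k = if ZMod.castHom h2 (ZMod 2) (k.1 + k.2) = 0 then 1 else -1 := rfl

lemma zmod2_sub_one : ∀ z : ZMod 2, z - 1 = z + 1 := by decide

lemma phi_one : phi (one : Omega L) = one := by
  rw [phi_eq_one_iff]
  intro k
  simp [nbhdSum, one]

lemma phi_chess (h2 : (2 : ℕ) ∣ L) : phi (chess L h2) = one := by
  rw [phi_eq_one_iff]
  intro k
  set c := ZMod.castHom h2 (ZMod 2) (k.1 + k.2) with hc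
  have a1 : ZMod.castHom h2 (ZMod 2) ((k + ((1 : ZMod L), (0 : ZMod L))).1
      + (k + ((1 : ZMod L), (0 : ZMod L))).2) = c + 1 := by
    have e : (k + ((1 : ZMod L), (0 : ZMod L))).1 + (k + ((1 : ZMod L), (0 : ZMod L))).2
        = (k.1 + k.2) + 1 := by
      simp only [Prod.fst_add, Prod.snd_add]; ring
    rw [e, map_add, map_one, hc]
  have a2 : ZMod.castHom h2 (ZMod 2) ((k - ((1 : ZMod L), (0 : ZMod L))).1
      + (k - ((1 : ZMod L), (0 : ZMod L))).2) = c + 1 := by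
    have e : (k - ((1 : ZMod L), (0 : ZMod L))).1 + (k - ((1 : ZMod L), (0 : ZMod L))).2
        = (k.1 + k.2) - 1 := by
      simp only [Prod.fst_sub, Prod.snd_sub]; ring
    rw [e, map_sub, map_one, hc, zmod2_sub_one _]
  have a3 : ZMod.castHom h2 (ZMod 2) ((k + ((0 : ZMod L), (1 : ZMod L))).1
      + (k + ((0 : ZMod L), (1 : ZMod L))).2) = c + 1 := by
    have e : (k + ((0 : ZMod L), (1 : ZMod L))).1 + (k + ((0 : ZMod L), (1 : ZMod L))).2
        = (k.1 + k.2) + 1 := by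
      simp only [Prod.fst_add, Prod.snd_add]; ring
    rw [e, map_add, map_one, hc]
  have a4 : ZMod.castHom h2 (ZMod 2) ((k - ((0 : ZMod L), (1 : ZMod L))).1
      + (k - ((0 : ZMod L), (1 : ZMod L))).2) = c + 1 := by
    have e : (k - ((0 : ZMod L), (1 : ZMod L))).1 + (k - ((0 : ZMod L), (1 : ZMod L))).2
        = (k.1 + k.2) - 1 := by
      simp only [Prod.fst_sub, Prod.snd_sub]; ring
    rw [e, map_sub, map_one, hc, zmod2_sub_one _]
  unfold nbhdSum
  rw [chess_val h2 (k + (1, 0)), chess_val h2 (k - (1, 0)),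
      chess_val h2 (k + (0, 1)), chess_val h2 (k - (0, 1)), a1, a2, a3, a4]
  by_cases h : c + 1 = 0 <;> simp [h]

lemma omega_finite [NeZero L] : Finite (Omega L) := by
  apply Finite.of_injective (fun x : Omega L => (fun k => decide (x.1 k = 1) : Site L → Bool))
  intro x y h
  apply Subtype.ext; funext k
  have := congrFun h k
  rcases x.2 k with hx | hx <;> rcases y.2 k with hy | hy <;>
    simp [hx, hy] at this ⊢

end Q2R

open Q2R

/-- Auxiliary: the signature values of the four basic fixed points. -/
def q2rVP : Fin 4 → ℤ × ℤ := ![(1, 1), (-1, -1), (1, -1), (-1, 1)]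

set_option maxHeartbeats 1000000 in
/-- For every even `L ≥ 2`, `4 ≤ |P₁|` and `|P₁| < |P₂|`. -/
theorem q2r_card_P1_bounds (L : ℕ) (hL : 2 ≤ L) (hE : Even L) :
    4 ≤ Nat.card {p : Omega L × Omega L | F p = p} ∧
      Nat.card {p : Omega L × Omega L | F p = p} <
        Nat.card {p : Omega L × Omega L | IsMinPeriod p 2} := by
  haveI : NeZero L := ⟨by omega⟩
  haveI : Finite (Omega L) := omega_finite
  have h2 : (2 : ℕ) ∣ L := hE.two_dvd
  set ch := chess L h2 with hch
  have hch00 : ch.1 (0, 0) = 1 := by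
    rw [hch, chess_val]
    simp
  have hch0 : ch.1 0 = 1 := hch00
  have hch01 : ch.1 (0, 1) = -1 := by
    rw [hch, chess_val]
    have hne : ZMod.castHom h2 (ZMod 2) ((0 : ZMod L) + (1 : ZMod L)) ≠ 0 := by
      rw [zero_add, map_one]; exact one_ne_zero
    rw [if_neg]
    exact hne
  have hmemS : ∀ x : Omega L, phi x = one →
      ((x, x) : Omega L × Omega L) ∈ {p : Omega L × Omega L | F p = p} :=
    fun x hx => (fixed_iff (x, x)).2 ⟨rfl, hx⟩
  have hone : phi (one : Omega L) = one := phi_one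
  have hnegone : phi (neg (one : Omega L)) = one := by rw [phi_neg]; exact phi_one
  have hchp : phi ch = one := phi_chess h2
  have hnegch : phi (neg ch) = one := by rw [phi_neg]; exact hchp
  constructor
  · -- 4 ≤ card
    let f : Fin 4 → {p : Omega L × Omega L | F p = p} := fun i =>
      match i with
      | 0 => ⟨(one, one), hmemS one hone⟩
      | 1 => ⟨(neg one, neg one), hmemS _ hnegone⟩
      | 2 => ⟨(ch, ch), hmemS _ hchp⟩
      | 3 => ⟨(neg ch, neg ch), hmemS _ hnegch⟩
    have hf : Function.Injective f := by
      have vals : ∀ i : Fin 4, ((f i).1.1.1 (0,0), (f i).1.1.1 (0,1)) = q2rVP i := by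
        intro i
        fin_cases i <;>
          simp [f, q2rVP, one, neg_val, neg, had, hch0, hch00, hch01]
      intro a b hab
      have hv : q2rVP a = q2rVP b := by
        rw [← vals a, ← vals b, hab]
      fin_cases a <;> fin_cases b <;>
        first
          | rfl
          | exact absurd hv (by decide)
    calc (4 : ℕ) = Nat.card (Fin 4) := by simp
      _ ≤ Nat.card {p : Omega L × Omega L | F p = p} :=
        Nat.card_le_card_of_injective f hf
  · -- strict inequality
    let g : {p : Omega L × Omega L | F p = p} → {p : Omega L × Omega L | IsMinPeriod p 2} :=
      fun q => ⟨(q.1.1, neg q.1.1), by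
        have hq := (fixed_iff q.1).1 q.2
        refine (min2_iff _).2 ⟨hq.2, ?_, ?_⟩
        · show phi (neg q.1.1) = one; rw [phi_neg]; exact hq.2
        · exact fun h => neg_ne q.1.1 h.symm⟩
    have hg : Function.Injective g := by
      intro a b hab
      have hab2 : ((a.1.1, neg a.1.1) : Omega L × Omega L) = (b.1.1, neg b.1.1) :=
        Subtype.ext_iff.1 hab
      have h1 : a.1.1 = b.1.1 := (Prod.ext_iff.1 hab2).1
      have ha := (fixed_iff a.1).1 a.2
      have hb := (fixed_iff b.1).1 b.2
      apply Subtype.ext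
      exact Prod.ext h1 (ha.1.trans (h1.trans hb.1.symm))
    have hns : ¬ Function.Surjective g := by
      intro hs
      obtain ⟨q, hq⟩ := hs ⟨(one, ch), (min2_iff _).2 ⟨hone, hchp, by
        intro h
        have := congrFun (congrArg Subtype.val h) (0, 1)
        rw [hch01] at this
        norm_num [one] at this⟩⟩
      have hq2 : ((q.1.1, neg q.1.1) : Omega L × Omega L) = (one, ch) :=
        Subtype.ext_iff.1 hq
      have h1 : q.1.1 = one := (Prod.ext_iff.1 hq2).1
      have h2' : neg q.1.1 = ch := (Prod.ext_iff.1 hq2).2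
      rw [h1] at h2'
      have := congrFun (congrArg Subtype.val h2') (0, 0)
      rw [neg_val, hch00] at this
      norm_num [one] at this
    haveI : Fintype {p : Omega L × Omega L | F p = p} := Fintype.ofFinite _
    haveI : Fintype {p : Omega L × Omega L | IsMinPeriod p 2} := Fintype.ofFinite _
    rw [Nat.card_eq_fintype_card, Nat.card_eq_fintype_card]
    exact Fintype.card_lt_of_injective_not_surjective g hg hns
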